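/- Practical worst-case CVaR input-to-state stability of x_{t+1} = A x_t + D v_t + E w_t (explicit bound): assume spectral norm ‖A‖ < 1 and Σ_w positive semidefinite, and let P := Σ_{k=0}^∞ A^k E Σ_w Eᵀ (Aᵀ)^k. Then for all α₁ > 0, α₂ > 0, every initial state x₀, every sequence of inputs v₀, …, v_{t−1} ∈ ℝ^{n_v}, and every t ≥ 1: sup_{P ∈ M_t} CVaR_ε^P[ ‖A^t x₀ + G_t v̄_t + H_t w̄_t‖² ] ≤ (1+α₁²)·‖A‖^{2t}·‖x₀‖² + (1+1/α₁²)·(1+α₂²)·(‖D‖/(1−‖A‖))²·max_{0≤τ≤t−1}‖v_τ‖² + (1+1/α₁²)·(1+1/α₂²)·(1/ε)·Tr(P). In particular the system is practically worst-case CVaR input-to-state stable. -/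

import Mathlib

open MeasureTheory Matrix Kronecker

/-- Spectral norm (largest singular value) of a real matrix, as the operator norm of the
induced map between Euclidean spaces. -/
noncomputable def specNorm {m n : Type*} [Fintype m] [Fintype n] [DecidableEq n]
    (A : Matrix m n ℝ) : ℝ :=
  ‖LinearMap.toContinuousLinearMap (Matrix.toEuclideanLin A)‖

/-- Conditional value-at-risk at level `ε` of the loss `L` under the measure `P`:
`CVaR_ε^P[L] = inf_β ( β + (1/ε) E_P[max (L ξ - β) 0] )`. -/
noncomputable def CVaR {ι : Type*} [Fintype ι] (ε : ℝ)
    (P : Measure (EuclideanSpace ℝ ι)) (L : EuclideanSpace ℝ ι → ℝ) : ℝ :=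
  ⨅ β : ℝ, (β + ε⁻¹ * ∫ ξ, max (L ξ - β) 0 ∂P)

/-- The set `M(S)` of Borel probability measures with zero mean and covariance `S`. -/
def MomentSet {ι : Type*} [Fintype ι] (S : Matrix ι ι ℝ) :
    Set (Measure (EuclideanSpace ℝ ι)) :=
  {P | IsProbabilityMeasure P ∧
       (∀ i, Integrable (fun ξ => ξ i) P) ∧
       (∀ i, ∫ ξ, ξ i ∂P = 0) ∧
       (∀ i j, Integrable (fun ξ => ξ i * ξ j) P) ∧
       (∀ i j, ∫ ξ, ξ i * ξ j ∂P = S i j)}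

/-- Worst-case CVaR over the moment set `M(S)`. -/
noncomputable def wcCVaR {ι : Type*} [Fintype ι] (ε : ℝ) (S : Matrix ι ι ℝ)
    (L : EuclideanSpace ℝ ι → ℝ) : ℝ :=
  ⨆ P : MomentSet S, CVaR ε (P : Measure (EuclideanSpace ℝ ι)) L

/-- The block matrix `H_t = [A^(t-1) E, A^(t-2) E, ..., E]`, viewed as a matrix acting on the
stacked disturbance vector `w̄_t = (w_0, ..., w_(t-1))` (indexed by `Fin t × Fin nw`),
so that `H_t w̄_t = Σ_k A^(t-1-k) E w_k`. -/
noncomputable def Hmat {nx nw : ℕ} (A : Matrix (Fin nx) (Fin nx) ℝ)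
    (E : Matrix (Fin nx) (Fin nw) ℝ) (t : ℕ) :
    Matrix (Fin nx) (Fin t × Fin nw) ℝ :=
  Matrix.of fun i p => (A ^ (t - 1 - (p.1 : ℕ)) * E) i p.2

set_option linter.unusedSectionVars false

section L2
open scoped Matrix.Norms.L2Operator

variable {m n p : Type*} [Fintype m] [Fintype n] [Fintype p] [DecidableEq m] [DecidableEq n] [DecidableEq p]

lemma specNorm_eq_norm (A : Matrix m n ℝ) : specNorm A = ‖A‖ := rfl

lemma specNorm_nonneg (A : Matrix m n ℝ) : 0 ≤ specNorm A := by
  rw [specNorm_eq_norm]; exact norm_nonneg A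

lemma specNorm_mul_le (A : Matrix m n ℝ) (B : Matrix n p ℝ) :
    specNorm (A * B) ≤ specNorm A * specNorm B := by
  simp only [specNorm_eq_norm]; exact Matrix.l2_opNorm_mul A B

lemma specNorm_transpose (A : Matrix m n ℝ) : specNorm Aᵀ = specNorm A := by
  simp only [specNorm_eq_norm]
  rw [← Matrix.conjTranspose_eq_transpose_of_trivial]
  exact Matrix.l2_opNorm_conjTranspose A

lemma specNorm_pow_le (A : Matrix n n ℝ) (k : ℕ) : specNorm (A ^ k) ≤ specNorm A ^ k := by
  induction k with
  | zero =>
    simp only [pow_zero]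
    rw [specNorm_eq_norm, Matrix.cstar_norm_def, _root_.map_one]
    exact ContinuousLinearMap.norm_id_le
  | succ k ih =>
    rw [pow_succ, pow_succ]
    exact le_trans (specNorm_mul_le _ _) (mul_le_mul_of_nonneg_right ih (specNorm_nonneg A) |>.trans le_rfl) |>.trans (le_of_eq rfl)

lemma norm_toEuclideanLin_apply_le (M : Matrix m n ℝ) (x : EuclideanSpace ℝ n) :
    ‖Matrix.toEuclideanLin M x‖ ≤ specNorm M * ‖x‖ := by
  have h := (LinearMap.toContinuousLinearMap (Matrix.toEuclideanLin M)).le_opNorm x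
  simpa [specNorm] using h

lemma euclidean_abs_apply_le_norm (y : EuclideanSpace ℝ m) (i : m) : |y i| ≤ ‖y‖ := by
  rw [EuclideanSpace.norm_eq]
  have h1 : |y i| = Real.sqrt (‖y i‖ ^ 2) := by
    rw [Real.sqrt_sq_eq_abs]; simp
  rw [h1]
  apply Real.sqrt_le_sqrt
  exact Finset.single_le_sum (f := fun j => ‖y j‖ ^ 2) (fun j _ => by positivity)
    (Finset.mem_univ i)

lemma abs_entry_le_specNorm (B : Matrix m n ℝ) (i : m) (j : n) : |B i j| ≤ specNorm B := by
  have h1 : (Matrix.toEuclideanLin B (EuclideanSpace.single j (1:ℝ))) i = B i j := by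
    rw [Matrix.toEuclideanLin_apply]
    simp [Matrix.mulVec_single]
  have h2 := euclidean_abs_apply_le_norm (Matrix.toEuclideanLin B (EuclideanSpace.single j (1:ℝ))) i
  have h3 := norm_toEuclideanLin_apply_le B (EuclideanSpace.single j (1:ℝ))
  rw [h1] at h2
  simpa using h2.trans h3

lemma posSemidef_trace_nonneg {n' : Type*} [Fintype n'] [DecidableEq n']
    {M : Matrix n' n' ℝ} (hM : M.PosSemidef) : 0 ≤ M.trace := by
  exact hM.trace_nonneg

lemma entry_pow_bound {n' : Type*} [Fintype n'] [DecidableEq n']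
    (A M : Matrix n' n' ℝ) (k : ℕ) (i j : n') :
    |(A ^ k * M * (Aᵀ) ^ k) i j| ≤ (specNorm A ^ 2) ^ k * specNorm M := by
  have h1 := abs_entry_le_specNorm (A ^ k * M * (Aᵀ) ^ k) i j
  have h2 : specNorm (A ^ k * M * (Aᵀ) ^ k) ≤ specNorm A ^ k * specNorm M * specNorm A ^ k := by
    calc specNorm (A ^ k * M * (Aᵀ) ^ k) ≤ specNorm (A ^ k * M) * specNorm ((Aᵀ) ^ k) :=
          specNorm_mul_le _ _
      _ ≤ (specNorm (A ^ k) * specNorm M) * specNorm ((Aᵀ) ^ k) := by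
          apply mul_le_mul_of_nonneg_right (specNorm_mul_le _ _) (specNorm_nonneg _)
      _ ≤ (specNorm A ^ k * specNorm M) * specNorm A ^ k := by
          have hT : specNorm ((Aᵀ) ^ k) ≤ specNorm A ^ k := by
            rw [← Matrix.transpose_pow, specNorm_transpose]
            exact specNorm_pow_le _ _
          apply mul_le_mul (mul_le_mul_of_nonneg_right (specNorm_pow_le _ _) (specNorm_nonneg _))
            hT (specNorm_nonneg _)
          exact mul_nonneg (pow_nonneg (specNorm_nonneg A) k) (specNorm_nonneg M)
  have h3 : specNorm A ^ k * specNorm M * specNorm A ^ k = (specNorm A ^ 2) ^ k * specNorm M := by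
    ring
  linarith

end L2

section Trace

variable {n' : Type*} [Fintype n'] [DecidableEq n']

lemma summable_powMulPow {A M : Matrix n' n' ℝ} (hA : specNorm A < 1) :
    Summable (fun k : ℕ => A ^ k * M * (Aᵀ) ^ k) := by
  have hr : specNorm A ^ 2 < 1 :=
    pow_lt_one₀ (specNorm_nonneg A) hA (by norm_num)
  have hr0 : (0:ℝ) ≤ specNorm A ^ 2 := by positivity
  apply Pi.summable.mpr; intro i
  apply Pi.summable.mpr; intro j
  apply Summable.of_norm_bounded ((summable_geometric_of_lt_one hr0 hr).mul_right (specNorm M))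
  intro k
  simpa [Real.norm_eq_abs] using entry_pow_bound A M k i j

lemma hasSum_trace_powMulPow {A M : Matrix n' n' ℝ} (hA : specNorm A < 1) :
    HasSum (fun k : ℕ => (A ^ k * M * (Aᵀ) ^ k).trace)
      (Matrix.trace (∑' k : ℕ, A ^ k * M * (Aᵀ) ^ k)) := by
  have hs := summable_powMulPow (M := M) hA
  exact hs.hasSum.map (Matrix.traceAddMonoidHom n' ℝ) (Continuous.matrix_trace continuous_id)

lemma trace_partial_le_trace_tsum {A M : Matrix n' n' ℝ} (hA : specNorm A < 1)
    (hM : M.PosSemidef) (t : ℕ) :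
    ∑ m ∈ Finset.range t, (A ^ m * M * (Aᵀ) ^ m).trace ≤
      Matrix.trace (∑' k : ℕ, A ^ k * M * (Aᵀ) ^ k) := by
  have h := hasSum_trace_powMulPow (M := M) (A := A) hA
  rw [← h.tsum_eq]
  apply Summable.sum_le_tsum (Finset.range t) _ h.summable
  intro k _
  apply posSemidef_trace_nonneg
  have := hM.mul_mul_conjTranspose_same (A ^ k)
  rwa [Matrix.conjTranspose_eq_transpose_of_trivial, Matrix.transpose_pow] at this

end Trace

section Integration

variable {J : Type*} [Fintype J]

lemma sq_affine_expand (b : ℝ) (a : J → ℝ) (ξ : J → ℝ) :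
    (b + ∑ j, a j * ξ j) ^ 2 =
      b ^ 2 + (∑ j, (2 * b * a j) * ξ j) + ∑ j, ∑ k, (a j * a k) * (ξ j * ξ k) := by
  have h1 : (∑ j, a j * ξ j) ^ 2 = ∑ j, ∑ k, (a j * a k) * (ξ j * ξ k) := by
    rw [sq, Finset.sum_mul_sum]
    exact Finset.sum_congr rfl fun j _ => Finset.sum_congr rfl fun k _ => by ring
  have h2 : 2 * b * (∑ j, a j * ξ j) = ∑ j, (2 * b * a j) * ξ j := by
    rw [Finset.mul_sum]
    exact Finset.sum_congr rfl fun j _ => by ring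
  rw [add_sq, h1, ← h2]

lemma integrable_sq_affine {P : Measure (EuclideanSpace ℝ J)} [IsProbabilityMeasure P]
    (h1 : ∀ i, Integrable (fun ξ : EuclideanSpace ℝ J => ξ i) P)
    (h2 : ∀ i j, Integrable (fun ξ : EuclideanSpace ℝ J => ξ i * ξ j) P)
    (b : ℝ) (a : J → ℝ) :
    Integrable (fun ξ : EuclideanSpace ℝ J => (b + ∑ j, a j * ξ j) ^ 2) P := by
  simp only [sq_affine_expand]
  apply Integrable.add
  · apply Integrable.add (integrable_const _)
    exact integrable_finset_sum _ fun j _ => (h1 j).const_mul _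
  · exact integrable_finset_sum _ fun j _ =>
      integrable_finset_sum _ fun k _ => (h2 j k).const_mul _

lemma integral_sq_linear {P : Measure (EuclideanSpace ℝ J)} [IsProbabilityMeasure P]
    (h2 : ∀ i j, Integrable (fun ξ : EuclideanSpace ℝ J => ξ i * ξ j) P)
    {S : Matrix J J ℝ} (h5 : ∀ i j, ∫ ξ, ξ i * ξ j ∂P = S i j) (a : J → ℝ) :
    ∫ ξ, (∑ j, a j * ξ j) ^ 2 ∂P = ∑ j, ∑ k, (a j * a k) * S j k := by
  have hfun : ∀ ξ : EuclideanSpace ℝ J,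
      (∑ j, a j * ξ j) ^ 2 = ∑ j, ∑ k, (a j * a k) * (ξ j * ξ k) := by
    intro ξ
    have := sq_affine_expand 0 a (fun j => ξ j)
    simpa using this
  simp_rw [hfun]
  rw [integral_finset_sum _ fun j _ =>
    integrable_finset_sum _ fun k _ => (h2 j k).const_mul _]
  refine Finset.sum_congr rfl fun j _ => ?_
  rw [integral_finset_sum _ fun k _ => (h2 j k).const_mul _]
  refine Finset.sum_congr rfl fun k _ => ?_
  rw [MeasureTheory.integral_const_mul, h5]

lemma normsq_eq_sum (y : EuclideanSpace ℝ J) : ‖y‖ ^ 2 = ∑ i, (y i) ^ 2 := by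
  rw [EuclideanSpace.norm_eq, Real.sq_sqrt (by positivity)]
  exact Finset.sum_congr rfl fun i _ => by rw [Real.norm_eq_abs, sq_abs]

lemma norm_add_toEuclideanLin_sq [DecidableEq J] {m' : Type*} [Fintype m'] (H : Matrix m' J ℝ)
    (d : EuclideanSpace ℝ m') (ξ : EuclideanSpace ℝ J) :
    ‖d + Matrix.toEuclideanLin H ξ‖ ^ 2 = ∑ i, (d i + ∑ j, H i j * ξ j) ^ 2 := by
  rw [normsq_eq_sum]
  refine Finset.sum_congr rfl fun i _ => ?_
  have happ : (d + Matrix.toEuclideanLin H ξ) i = d i + ∑ j, H i j * ξ j := by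
    rw [PiLp.add_apply]
    congr 1
  rw [happ]

end Integration

lemma CVaR_le_bound {ι : Type*} [Fintype ι] {ε : ℝ} (hε : 0 < ε) (hε1 : ε < 1)
    (P : Measure (EuclideanSpace ℝ ι)) [IsProbabilityMeasure P]
    (L g : EuclideanSpace ℝ ι → ℝ) (hL : Integrable L P) (hg : Integrable g P)
    (β₀ : ℝ) (hpt : ∀ ξ, L ξ ≤ β₀ + g ξ) (hg0 : ∀ ξ, 0 ≤ g ξ) :
    CVaR ε P L ≤ β₀ + ε⁻¹ * ∫ ξ, g ξ ∂P := by
  have hinv1 : 1 ≤ ε⁻¹ := (one_le_inv₀ hε).mpr hε1.le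
  have hinv0 : 0 ≤ ε⁻¹ := inv_nonneg.mpr hε.le
  have hbb : BddBelow (Set.range fun β : ℝ => β + ε⁻¹ * ∫ ξ, max (L ξ - β) 0 ∂P) := by
    refine ⟨min 0 (ε⁻¹ * ∫ ξ, L ξ ∂P), ?_⟩
    rintro x ⟨β, rfl⟩
    have hmax : Integrable (fun ξ => max (L ξ - β) 0) P :=
      (hL.sub (integrable_const β)).pos_part
    rcases le_or_gt 0 β with hβ | hβ
    · have h0 : 0 ≤ ∫ ξ, max (L ξ - β) 0 ∂P := integral_nonneg fun ξ => le_max_right _ _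
      exact le_trans (min_le_left _ _) (add_nonneg hβ (mul_nonneg hinv0 h0))
    · have hint : ∫ ξ, (L ξ - β) ∂P ≤ ∫ ξ, max (L ξ - β) 0 ∂P :=
        integral_mono (hL.sub (integrable_const β)) hmax fun ξ => le_max_left _ _
      have heq : ∫ ξ, (L ξ - β) ∂P = (∫ ξ, L ξ ∂P) - β := by
        rw [integral_sub hL (integrable_const β), integral_const]; simp
      rw [heq] at hint
      have h2 : β + ε⁻¹ * ((∫ ξ, L ξ ∂P) - β) ≤ β + ε⁻¹ * ∫ ξ, max (L ξ - β) 0 ∂P :=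
        add_le_add_right (mul_le_mul_of_nonneg_left hint hinv0) β
      have h3 : ε⁻¹ * ∫ ξ, L ξ ∂P ≤ β + ε⁻¹ * ((∫ ξ, L ξ ∂P) - β) := by nlinarith
      exact le_trans (min_le_right _ _) (h3.trans h2)
  have hkey := ciInf_le hbb β₀
  refine hkey.trans ?_
  apply add_le_add_right
  apply mul_le_mul_of_nonneg_left _ hinv0
  apply integral_mono ((hL.sub (integrable_const β₀)).pos_part) hg
  intro ξ
  refine max_le ?_ (hg0 ξ)
  show L ξ - β₀ ≤ g ξ
  linarith [hpt ξ]

lemma young_norm_sq {F : Type*} [SeminormedAddCommGroup F] (x y : F) {s : ℝ} (hs : 0 < s) :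
    ‖x + y‖ ^ 2 ≤ (1 + s) * ‖x‖ ^ 2 + (1 + 1 / s) * ‖y‖ ^ 2 := by
  have h : ‖x + y‖ ^ 2 ≤ (‖x‖ + ‖y‖) ^ 2 :=
    pow_le_pow_left₀ (norm_nonneg _) (norm_add_le x y) 2
  have hu : s * (1 / s) = 1 := mul_one_div_cancel hs.ne'
  nlinarith [sq_nonneg (s * ‖x‖ - ‖y‖), norm_nonneg x, norm_nonneg y, hs,
    mul_pos hs hs, sq_nonneg ‖x‖, sq_nonneg ‖y‖]

lemma geom_partial_le {r : ℝ} (h0 : 0 ≤ r) (h1 : r < 1) (t : ℕ) :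
    ∑ k ∈ Finset.range t, r ^ k ≤ 1 / (1 - r) := by
  have hs : Summable (fun k : ℕ => r ^ k) := summable_geometric_of_lt_one h0 h1
  have := Summable.sum_le_tsum (Finset.range t) (fun k _ => pow_nonneg h0 k) hs
  rwa [tsum_geometric_of_lt_one h0 h1, ← one_div] at this

lemma trace_BSBt {nx nw : ℕ} (Sw : Matrix (Fin nw) (Fin nw) ℝ)
    (B : Matrix (Fin nx) (Fin nw) ℝ) :
    ∑ i : Fin nx, ∑ p : Fin nw, ∑ q : Fin nw, (B i p * B i q) * Sw p q
      = (B * Sw * Bᵀ).trace := by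
  simp only [Matrix.trace, Matrix.diag, Matrix.mul_apply, Matrix.transpose_apply,
    Finset.sum_mul, Finset.mul_sum]
  refine Finset.sum_congr rfl fun i _ => ?_
  rw [Finset.sum_comm]
  refine Finset.sum_congr rfl fun p _ => Finset.sum_congr rfl fun q _ => by ring

lemma T_eq {nx nw : ℕ} (A : Matrix (Fin nx) (Fin nx) ℝ) (E : Matrix (Fin nx) (Fin nw) ℝ)
    (Sw : Matrix (Fin nw) (Fin nw) ℝ) (t : ℕ) :
    ∑ i : Fin nx, ∑ j : Fin t × Fin nw, ∑ k : Fin t × Fin nw,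
      (Hmat A E t i j * Hmat A E t i k) * ((1 : Matrix (Fin t) (Fin t) ℝ) ⊗ₖ Sw) j k
    = ∑ m ∈ Finset.range t, (A ^ m * (E * Sw * Eᵀ) * (Aᵀ) ^ m).trace := by
  have step1 : ∑ i : Fin nx, ∑ j : Fin t × Fin nw, ∑ k : Fin t × Fin nw,
      (Hmat A E t i j * Hmat A E t i k) * ((1 : Matrix (Fin t) (Fin t) ℝ) ⊗ₖ Sw) j k
      = ∑ a : Fin t, ∑ i : Fin nx, ∑ p : Fin nw, ∑ q : Fin nw,
        ((A ^ (t - 1 - (a:ℕ)) * E) i p * (A ^ (t - 1 - (a:ℕ)) * E) i q) * Sw p q := by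
    simp only [Fintype.sum_prod_type, Matrix.kroneckerMap_apply, Matrix.one_apply,
      ite_mul, one_mul, zero_mul, mul_ite, mul_zero, Finset.sum_ite_irrel,
      Finset.sum_ite_eq, Finset.mem_univ, if_true, Finset.sum_const_zero]
    rw [Finset.sum_comm]
    refine Finset.sum_congr rfl fun a _ => Finset.sum_congr rfl fun i _ => ?_
    rfl
  rw [step1]
  have step2 : ∀ a : Fin t, (∑ i : Fin nx, ∑ p : Fin nw, ∑ q : Fin nw,
      ((A ^ (t - 1 - (a:ℕ)) * E) i p * (A ^ (t - 1 - (a:ℕ)) * E) i q) * Sw p q)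
      = (A ^ (t - 1 - (a:ℕ)) * (E * Sw * Eᵀ) * (Aᵀ) ^ (t - 1 - (a:ℕ))).trace := by
    intro a
    rw [trace_BSBt]
    congr 1
    rw [Matrix.transpose_mul, Matrix.transpose_pow]
    simp only [Matrix.mul_assoc]
  simp only [step2]
  rw [Fin.sum_univ_eq_sum_range (fun m => (A ^ (t-1-m) * (E * Sw * Eᵀ) * (Aᵀ) ^ (t-1-m)).trace) t]
  exact Finset.sum_range_reflect (fun m => (A ^ m * (E * Sw * Eᵀ) * (Aᵀ) ^ m).trace) t

/-- explicit practical input-to-state stability bound for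
`x_{t+1} = A x_t + D v_t + E w_t`. -/
theorem stmt13 {nx nv nw : ℕ} (ε : ℝ) (hε : ε ∈ Set.Ioo (0 : ℝ) 1)
    (A : Matrix (Fin nx) (Fin nx) ℝ) (D : Matrix (Fin nx) (Fin nv) ℝ)
    (E : Matrix (Fin nx) (Fin nw) ℝ) (Sw : Matrix (Fin nw) (Fin nw) ℝ)
    (hA : specNorm A < 1) (hSw : Sw.PosSemidef) :
    ∀ α₁ α₂ : ℝ, 0 < α₁ → 0 < α₂ →
    ∀ x₀ : EuclideanSpace ℝ (Fin nx), ∀ v : ℕ → EuclideanSpace ℝ (Fin nv),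
    ∀ t : ℕ, (ht : 1 ≤ t) →
      wcCVaR ε ((1 : Matrix (Fin t) (Fin t) ℝ) ⊗ₖ Sw)
        (fun w => ‖Matrix.toEuclideanLin (A ^ t) x₀ +
          (∑ k ∈ Finset.range t, Matrix.toEuclideanLin (A ^ k * D) (v (t - 1 - k))) +
          Matrix.toEuclideanLin (Hmat A E t) w‖ ^ 2) ≤
      (1 + α₁ ^ 2) * specNorm A ^ (2 * t) * ‖x₀‖ ^ 2 +
        (1 + 1 / α₁ ^ 2) * (1 + α₂ ^ 2) * (specNorm D / (1 - specNorm A)) ^ 2 *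
          (Finset.range t).sup' (Finset.nonempty_range_iff.mpr (by omega))
            (fun τ => ‖v τ‖ ^ 2) +
        (1 + 1 / α₁ ^ 2) * (1 + 1 / α₂ ^ 2) * ε⁻¹ *
          Matrix.trace (∑' k : ℕ, A ^ k * (E * Sw * Eᵀ) * (Aᵀ) ^ k) := by
  obtain ⟨hε0, hε1⟩ := hε
  intro α₁ α₂ hα₁ hα₂ x₀ v t ht
  have hA0 : 0 ≤ specNorm A := specNorm_nonneg A
  have h1A : 0 < 1 - specNorm A := by linarith
  have hD0 : 0 ≤ specNorm D := specNorm_nonneg D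
  have hne : (Finset.range t).Nonempty := Finset.nonempty_range_iff.mpr (by omega)
  have h0mem : (0:ℕ) ∈ Finset.range t := Finset.mem_range.mpr (by omega)
  have hM : (E * Sw * Eᵀ).PosSemidef := by
    have h := hSw.mul_mul_conjTranspose_same E
    rwa [Matrix.conjTranspose_eq_transpose_of_trivial] at h
  have htr0 : 0 ≤ (∑' k : ℕ, A ^ k * (E * Sw * Eᵀ) * (Aᵀ) ^ k).trace := by
    simpa using trace_partial_le_trace_tsum hA hM 0
  set S : Matrix (Fin t × Fin nw) (Fin t × Fin nw) ℝ := (1 : Matrix (Fin t) (Fin t) ℝ) ⊗ₖ Sw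
    with hSdef
  set H : Matrix (Fin nx) (Fin t × Fin nw) ℝ := Hmat A E t with hHdef
  set a : EuclideanSpace ℝ (Fin nx) := Matrix.toEuclideanLin (A ^ t) x₀ with hadef
  set b : EuclideanSpace ℝ (Fin nx) :=
    ∑ k ∈ Finset.range t, Matrix.toEuclideanLin (A ^ k * D) (v (t - 1 - k)) with hbdef
  set Vm : ℝ := (Finset.range t).sup'
    (Finset.nonempty_range_iff.mpr (by omega)) (fun τ => ‖v τ‖ ^ 2) with hVmdef
  set W : ℝ := (Finset.range t).sup' hne (fun τ => ‖v τ‖) with hWdef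
  have hVm0 : 0 ≤ Vm :=
    le_trans (sq_nonneg ‖v 0‖) (Finset.le_sup' (fun τ => ‖v τ‖ ^ 2) h0mem)
  have hW0 : 0 ≤ W := le_trans (norm_nonneg (v 0)) (Finset.le_sup' (fun τ => ‖v τ‖) h0mem)
  have hWsq : W ^ 2 ≤ Vm := by
    obtain ⟨τ₀, hτ₀, hWeq⟩ := Finset.exists_mem_eq_sup' hne (fun τ => ‖v τ‖)
    rw [hWdef, hWeq]
    exact Finset.le_sup' (fun τ => ‖v τ‖ ^ 2) hτ₀
  set R : ℝ := specNorm D / (1 - specNorm A) with hRdef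
  have hR0 : 0 ≤ R := div_nonneg hD0 h1A.le
  -- norm bounds
  have haN : ‖a‖ ^ 2 ≤ specNorm A ^ (2 * t) * ‖x₀‖ ^ 2 := by
    have h1 := norm_toEuclideanLin_apply_le (A ^ t) x₀
    have h2 : specNorm (A ^ t) * ‖x₀‖ ≤ specNorm A ^ t * ‖x₀‖ :=
      mul_le_mul_of_nonneg_right (specNorm_pow_le A t) (norm_nonneg _)
    have h3 : ‖a‖ ≤ specNorm A ^ t * ‖x₀‖ := h1.trans h2
    calc ‖a‖ ^ 2 ≤ (specNorm A ^ t * ‖x₀‖) ^ 2 := pow_le_pow_left₀ (norm_nonneg _) h3 2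
      _ = specNorm A ^ (2 * t) * ‖x₀‖ ^ 2 := by rw [mul_pow, ← pow_mul, mul_comm t 2]
  have hbn : ‖b‖ ≤ R * W := by
    calc ‖b‖ ≤ ∑ k ∈ Finset.range t, ‖Matrix.toEuclideanLin (A ^ k * D) (v (t - 1 - k))‖ :=
          norm_sum_le _ _
      _ ≤ ∑ k ∈ Finset.range t, specNorm A ^ k * (specNorm D * W) := by
          refine Finset.sum_le_sum fun k hk => ?_
          have h1 := norm_toEuclideanLin_apply_le (A ^ k * D) (v (t - 1 - k))
          have h2 : specNorm (A ^ k * D) ≤ specNorm A ^ k * specNorm D :=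
            (specNorm_mul_le _ _).trans
              (mul_le_mul_of_nonneg_right (specNorm_pow_le A k) hD0)
          have h3 : ‖v (t - 1 - k)‖ ≤ W :=
            Finset.le_sup' (fun τ => ‖v τ‖) (Finset.mem_range.mpr (by omega))
          calc ‖Matrix.toEuclideanLin (A ^ k * D) (v (t - 1 - k))‖
              ≤ specNorm (A ^ k * D) * ‖v (t - 1 - k)‖ := h1
            _ ≤ (specNorm A ^ k * specNorm D) * W := by
                apply mul_le_mul h2 h3 (norm_nonneg _)
                exact mul_nonneg (pow_nonneg hA0 k) hD0
            _ = specNorm A ^ k * (specNorm D * W) := by ring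
      _ = (∑ k ∈ Finset.range t, specNorm A ^ k) * (specNorm D * W) := by
          rw [← Finset.sum_mul]
      _ ≤ (1 / (1 - specNorm A)) * (specNorm D * W) :=
          mul_le_mul_of_nonneg_right (geom_partial_le hA0 hA t) (mul_nonneg hD0 hW0)
      _ = R * W := by rw [hRdef]; ring
  have hbN : ‖b‖ ^ 2 ≤ R ^ 2 * Vm := by
    have h4 : ‖b‖ ^ 2 ≤ (R * W) ^ 2 := pow_le_pow_left₀ (norm_nonneg _) hbn 2
    nlinarith [sq_nonneg R, hWsq]
  unfold wcCVaR
  apply Real.iSup_le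
  · rintro ⟨P, hP1, hP2, hP3, hP4, hP5⟩
    haveI := hP1
    set β₀ : ℝ := (1 + α₁ ^ 2) * specNorm A ^ (2 * t) * ‖x₀‖ ^ 2 +
      (1 + 1 / α₁ ^ 2) * (1 + α₂ ^ 2) * R ^ 2 * Vm with hβ₀def
    set K : ℝ := (1 + 1 / α₁ ^ 2) * (1 + 1 / α₂ ^ 2) with hKdef
    have hLrw : (fun w : EuclideanSpace ℝ (Fin t × Fin nw) =>
        ‖a + b + Matrix.toEuclideanLin H w‖ ^ 2)
        = fun w => ∑ i, ((a + b) i + ∑ j, H i j * w j) ^ 2 := by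
      funext w
      exact norm_add_toEuclideanLin_sq H (a + b) w
    have hL : Integrable (fun w : EuclideanSpace ℝ (Fin t × Fin nw) =>
        ‖a + b + Matrix.toEuclideanLin H w‖ ^ 2) P := by
      rw [hLrw]
      exact integrable_finset_sum _ fun i _ =>
        integrable_sq_affine hP2 hP4 ((a + b) i) (fun j => H i j)
    have hHrw : (fun w : EuclideanSpace ℝ (Fin t × Fin nw) =>
        ‖Matrix.toEuclideanLin H w‖ ^ 2)
        = fun w => ∑ i, (∑ j, H i j * w j) ^ 2 := by
      funext w
      have h := norm_add_toEuclideanLin_sq H 0 w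
      simpa using h
    have hHint : Integrable (fun w : EuclideanSpace ℝ (Fin t × Fin nw) =>
        ‖Matrix.toEuclideanLin H w‖ ^ 2) P := by
      rw [hHrw]
      refine integrable_finset_sum _ fun i _ => ?_
      simpa using integrable_sq_affine hP2 hP4 0 (fun j => H i j)
    have hT : ∫ w, ‖Matrix.toEuclideanLin H w‖ ^ 2 ∂P
        = ∑ i, ∑ j, ∑ k, (H i j * H i k) * S j k := by
      rw [hHrw, integral_finset_sum _ (fun i _ => by
        simpa using integrable_sq_affine hP2 hP4 0 (fun j => H i j))]
      refine Finset.sum_congr rfl fun i _ => ?_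
      have h := integral_sq_linear hP4 hP5 (fun j => H i j)
      simpa using h
    have htr : ∑ i, ∑ j, ∑ k, (H i j * H i k) * S j k
        ≤ (∑' k : ℕ, A ^ k * (E * Sw * Eᵀ) * (Aᵀ) ^ k).trace := by
      rw [hHdef, hSdef, T_eq A E Sw t]
      exact trace_partial_le_trace_tsum hA hM t
    have hpt : ∀ w : EuclideanSpace ℝ (Fin t × Fin nw),
        ‖a + b + Matrix.toEuclideanLin H w‖ ^ 2
          ≤ β₀ + K * ‖Matrix.toEuclideanLin H w‖ ^ 2 := by
      intro w
      have e2 : ‖b + Matrix.toEuclideanLin H w‖ ^ 2 ≤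
          (1 + α₂ ^ 2) * ‖b‖ ^ 2 + (1 + 1 / α₂ ^ 2) * ‖Matrix.toEuclideanLin H w‖ ^ 2 :=
        young_norm_sq _ _ (pow_pos hα₂ 2)
      calc ‖a + b + Matrix.toEuclideanLin H w‖ ^ 2
          = ‖a + (b + Matrix.toEuclideanLin H w)‖ ^ 2 := by rw [add_assoc]
        _ ≤ (1 + α₁ ^ 2) * ‖a‖ ^ 2 + (1 + 1 / α₁ ^ 2) * ‖b + Matrix.toEuclideanLin H w‖ ^ 2 :=
            young_norm_sq _ _ (pow_pos hα₁ 2)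
        _ ≤ (1 + α₁ ^ 2) * (specNorm A ^ (2 * t) * ‖x₀‖ ^ 2) +
            (1 + 1 / α₁ ^ 2) * ((1 + α₂ ^ 2) * (R ^ 2 * Vm) +
              (1 + 1 / α₂ ^ 2) * ‖Matrix.toEuclideanLin H w‖ ^ 2) := by
            refine add_le_add (mul_le_mul_of_nonneg_left haN (by positivity)) ?_
            refine mul_le_mul_of_nonneg_left ?_ (by positivity)
            exact e2.trans (add_le_add_left
              (mul_le_mul_of_nonneg_left hbN (by positivity)) _)
        _ = β₀ + K * ‖Matrix.toEuclideanLin H w‖ ^ 2 := by rw [hβ₀def, hKdef]; ring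
    have hg0 : ∀ w : EuclideanSpace ℝ (Fin t × Fin nw),
        0 ≤ K * ‖Matrix.toEuclideanLin H w‖ ^ 2 := by
      intro w; rw [hKdef]; positivity
    have hcv := CVaR_le_bound hε0 hε1 P _
      (fun w => K * ‖Matrix.toEuclideanLin H w‖ ^ 2) hL (hHint.const_mul K) β₀ hpt hg0
    refine hcv.trans ?_
    have hIg : ∫ w, K * ‖Matrix.toEuclideanLin H w‖ ^ 2 ∂P
        = K * ∑ i, ∑ j, ∑ k, (H i j * H i k) * S j k := by
      rw [MeasureTheory.integral_const_mul, hT]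
    rw [hIg]
    have hK0 : 0 ≤ K := by rw [hKdef]; positivity
    have hstep : ε⁻¹ * (K * (∑ i, ∑ j, ∑ k, (H i j * H i k) * S j k))
        ≤ ε⁻¹ * (K * (∑' k : ℕ, A ^ k * (E * Sw * Eᵀ) * (Aᵀ) ^ k).trace) :=
      mul_le_mul_of_nonneg_left (mul_le_mul_of_nonneg_left htr hK0) (inv_nonneg.mpr hε0.le)
    have hfin : β₀ + ε⁻¹ * (K * (∑' k : ℕ, A ^ k * (E * Sw * Eᵀ) * (Aᵀ) ^ k).trace)
        = (1 + α₁ ^ 2) * specNorm A ^ (2 * t) * ‖x₀‖ ^ 2 +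
          (1 + 1 / α₁ ^ 2) * (1 + α₂ ^ 2) * R ^ 2 * Vm +
          (1 + 1 / α₁ ^ 2) * (1 + 1 / α₂ ^ 2) * ε⁻¹ *
            (∑' k : ℕ, A ^ k * (E * Sw * Eᵀ) * (Aᵀ) ^ k).trace := by
      rw [hβ₀def, hKdef]; ring
    linarith [hstep]
  · have hc1 : (0:ℝ) ≤ (1 + α₁ ^ 2) * specNorm A ^ (2 * t) * ‖x₀‖ ^ 2 :=
      mul_nonneg (mul_nonneg (by positivity) (pow_nonneg hA0 _)) (sq_nonneg _)
    have hc2 : (0:ℝ) ≤ (1 + 1 / α₁ ^ 2) * (1 + α₂ ^ 2) * R ^ 2 * Vm :=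
      mul_nonneg (mul_nonneg (by positivity) (sq_nonneg R)) hVm0
    have hc3 : (0:ℝ) ≤ (1 + 1 / α₁ ^ 2) * (1 + 1 / α₂ ^ 2) * ε⁻¹ *
        (∑' k : ℕ, A ^ k * (E * Sw * Eᵀ) * (Aᵀ) ^ k).trace :=
      mul_nonneg (mul_nonneg (by positivity) (inv_nonneg.mpr hε0.le)) htr0
    linarith
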